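/- Let R be the monoid of functions r : S → S such that (i) qr ≤_𝓡 q for all q; (ii) q 𝓛 q′ implies qr 𝓛 q′r; (iii) there exists q_r ∈ S¹ with qr = q q_r whenever qr 𝓡 q. Then R is closed under composition (so is a transformation monoid on S), contains every blowup operator on S, and contains each right multiplication map r_m for m ∈ S¹. -/
import Mathlib


open Pointwise

/-- A variety of finite groups: a class of finite groups closed under finite direct
products, subgroups and homomorphic images. -/
structure GroupVariety : Type 1 where
  mem : ∀ (G : Type) [Group G] [Finite G], Prop
  closed_prod : ∀ (G H : Type) [Group G] [Finite G] [Group H] [Finite H],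
    mem G → mem H → mem (G × H)
  closed_sub : ∀ (G : Type) [Group G] [Finite G] (K : Subgroup G), mem G → mem K
  closed_hom : ∀ (G H : Type) [Group G] [Finite G] [Group H] [Finite H] (f : G →* H),
    Function.Surjective f → mem G → mem H

/-- The 𝐇-kernel of a finite group: the smallest normal subgroup whose quotient
belongs to the class `P` of finite groups. -/
def HKer (P : ∀ (G : Type) [Group G] [Finite G], Prop) (G : Type) [Group G] [Finite G] :
    Subgroup G :=
  sInf {N : Subgroup G |
    ∃ h : N.Normal, @P (G ⧸ N) (@QuotientGroup.Quotient.group G _ N h) inferInstance}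

/-- Green's preorder `x ≤_𝓛 y`, i.e. `x ∈ S¹y`. -/
def leL {S : Type} [Semigroup S] (x y : S) : Prop := x = y ∨ ∃ a, x = a * y
/-- Green's preorder `x ≤_𝓡 y`, i.e. `x ∈ yS¹`. -/
def leR {S : Type} [Semigroup S] (x y : S) : Prop := x = y ∨ ∃ a, x = y * a
/-- Green's relation `𝓛`. -/
def eqL {S : Type} [Semigroup S] (x y : S) : Prop := leL x y ∧ leL y x
/-- Green's relation `𝓡`. -/
def eqR {S : Type} [Semigroup S] (x y : S) : Prop := leR x y ∧ leR y x
/-- Green's preorder `≤_𝓗`. -/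
def leH {S : Type} [Semigroup S] (x y : S) : Prop := leL x y ∧ leR x y
/-- Green's relation `𝓗`. -/
def eqH {S : Type} [Semigroup S] (x y : S) : Prop := eqL x y ∧ eqR x y
/-- The 𝓗-class of `x`. -/
def HClass {S : Type} [Semigroup S] (x : S) : Set S := {y | eqH y x}
/-- The 𝓛-class of `x`. -/
def LClass {S : Type} [Semigroup S] (x : S) : Set S := {y | eqL y x}

/-- The right stabilizer of a subset of `S`, as a submonoid of `S¹ = WithOne S`. -/
def stRsub {S : Type} [Semigroup S] (X : Set S) : Submonoid (WithOne S) where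
  carrier := {u | ∀ x ∈ X, ∃ y ∈ X, (↑x * u : WithOne S) = ↑y}
  one_mem' := fun x hx => ⟨x, hx, mul_one _⟩
  mul_mem' := by
    intro u v hu hv x hx
    obtain ⟨y, hy, hxy⟩ := hu x hx
    obtain ⟨z, hz, hyz⟩ := hv y hy
    exact ⟨z, hz, by rw [← mul_assoc, hxy, hyz]⟩

/-- Right multiplication by an element of `S¹ = WithOne S`, as a map `S → S`. -/
noncomputable def actW {S : Type} [Semigroup S] (q : S) (m : WithOne S) : S :=
  @dite _ (m = 1) (Classical.dec _) (fun _ => q) (fun h => q * WithOne.unone h)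

/-- `s` is an 𝐇-element: the right Schützenberger group of its 𝓗-class lies in `V`;
equivalently, there is a group `G` in `V` and a surjection from the right stabilizer of
`H_s` onto `G` whose kernel is exactly the kernel of the action on `H_s`. -/
def IsHElement (V : GroupVariety) {S : Type} [Semigroup S] (s : S) : Prop :=
  ∃ (G : Type) (iG : Group G) (fG : Finite G), @GroupVariety.mem V G iG fG ∧
    ∃ f : ↥(stRsub (HClass s)) →* G, Function.Surjective f ∧
      ∀ u v : ↥(stRsub (HClass s)),
        f u = f v ↔ ∀ x ∈ HClass s, ((↑x : WithOne S) * ↑u) = ↑x * ↑v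

/-- A subset of `2^T` is H̄-saturated: a subsemigroup, downward closed, and closed
under taking unions of 𝐇-kernels of its subgroups. -/
def Saturated (V : GroupVariety) (T : Type) [Semigroup T] (A : Set (Set T)) : Prop :=
  (∀ X ∈ A, ∀ Y ∈ A, X * Y ∈ A) ∧
  (∀ X ∈ A, ∀ Y : Set T, Y ⊆ X → Y ∈ A) ∧
  (∀ (G : Type) (iG : Group G) (fG : Finite G) (ι : @MulHom G (Set T) _ _),
      Function.Injective ι → (∀ g : G, ι g ∈ A) →
      (⋃ g ∈ (@HKer V.mem G iG fG : Subgroup G), ι g) ∈ A)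

/-- The H̄-saturation of the set of singletons in `2^T`. -/
def SatSet (V : GroupVariety) (T : Type) [Semigroup T] [Finite T] : Set (Set T) :=
  ⋂₀ {A | Saturated V T A ∧ ∀ t : T, {t} ∈ A}

/-- The H̄-saturation `S = Sat_H̄(Tη)` of the singletons, as a subsemigroup of `2^T`. -/
def SatSub (V : GroupVariety) (T : Type) [Semigroup T] [Finite T] : Subsemigroup (Set T) where
  carrier := SatSet V T
  mul_mem' := by
    intro a b ha hb
    rw [SatSet, Set.mem_sInter] at *
    exact fun A hA => hA.1.1 a (ha A hA) b (hb A hA)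

/-- A pre-blowup operator on `S = Sat_H̄(Tη)`: (i) on each 𝓛-class it is given by right
multiplication by some `m_L ∈ S¹`; (ii) it fixes the 𝐇-elements and moves every other
element strictly 𝓗-downward; (iii) it enlarges each element (as a subset of `T`). -/
def IsPreBlowup (V : GroupVariety) (T : Type) [Semigroup T] [Finite T]
    (b : ↥(SatSub V T) → ↥(SatSub V T)) : Prop :=
  (∀ s : ↥(SatSub V T), ∃ m : WithOne ↥(SatSub V T), ∀ s', eqL s' s → b s' = actW s' m) ∧
  (∀ s : ↥(SatSub V T), IsHElement V s → b s = s) ∧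
  (∀ s : ↥(SatSub V T), ¬ IsHElement V s → leH (b s) s ∧ ¬ eqH (b s) s) ∧
  (∀ s : ↥(SatSub V T), (↑s : Set T) ⊆ (↑(b s) : Set T))

/-- The monoid `R` of functions on `W`: (i) `qr ≤_𝓡 q`; (ii) `r` preserves `𝓛`;
(iii) there is `q_r ∈ W¹` with `qr = q·q_r` whenever `qr 𝓡 q`. -/
def RMon (W : Type) [Semigroup W] : Set (W → W) :=
  {r | (∀ q, leR (r q) q) ∧ (∀ q q', eqL q q' → eqL (r q) (r q')) ∧
       ∃ qr : WithOne W, ∀ q, eqR (r q) q → r q = actW q qr}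


section Aux

variable {S : Type} [Semigroup S]

lemma actW_one (q : S) : actW q (1 : WithOne S) = q := dif_pos rfl

lemma actW_coe (q : S) (a : S) : actW q (↑a : WithOne S) = q * a := by
  rw [actW, dif_neg WithOne.coe_ne_one, WithOne.unone_coe]

lemma leR_refl (x : S) : leR x x := Or.inl rfl

lemma leR_trans {x y z : S} (h1 : leR x y) (h2 : leR y z) : leR x z := by
  rcases h1 with rfl | ⟨a, rfl⟩
  · exact h2
  · rcases h2 with rfl | ⟨b, rfl⟩
    · exact Or.inr ⟨a, rfl⟩
    · exact Or.inr ⟨b * a, (mul_assoc _ _ _)⟩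

lemma eqL_mul_right {q q' : S} (h : eqL q q') (a : S) : eqL (q * a) (q' * a) := by
  obtain ⟨h1, h2⟩ := h
  constructor
  · rcases h1 with rfl | ⟨c, rfl⟩
    · exact Or.inl rfl
    · exact Or.inr ⟨c, (mul_assoc _ _ _)⟩
  · rcases h2 with rfl | ⟨c, rfl⟩
    · exact Or.inl rfl
    · exact Or.inr ⟨c, (mul_assoc _ _ _)⟩

lemma eqL_actW {q q' : S} (h : eqL q q') (m : WithOne S) : eqL (actW q m) (actW q' m) := by
  rcases eq_or_ne m 1 with rfl | hm
  · rw [actW_one, actW_one]; exact h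
  · obtain ⟨a, rfl⟩ := WithOne.ne_one_iff_exists.mp hm
    rw [actW_coe, actW_coe]; exact eqL_mul_right h a

lemma actW_actW (q : S) (m m' : WithOne S) : actW (actW q m) m' = actW q (m * m') := by
  rcases eq_or_ne m 1 with rfl | hm
  · rw [actW_one, one_mul]
  · obtain ⟨a, rfl⟩ := WithOne.ne_one_iff_exists.mp hm
    rcases eq_or_ne m' 1 with rfl | hm'
    · rw [actW_one, mul_one]
    · obtain ⟨b, rfl⟩ := WithOne.ne_one_iff_exists.mp hm'
      rw [actW_coe, actW_coe, ← WithOne.coe_mul, actW_coe, mul_assoc]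

/-- In a finite monoid, every element has an idempotent power with positive exponent. -/
lemma exists_idem_pow {M : Type} [Monoid M] [Finite M] (c : M) :
    ∃ n, 0 < n ∧ c ^ n * c ^ n = c ^ n := by
  obtain ⟨m, n, hmn, h⟩ : ∃ m n : ℕ, m < n ∧ c ^ m = c ^ n := by
    obtain ⟨a, b, hab, h⟩ := Finite.exists_ne_map_eq_of_infinite (fun k : ℕ => c ^ k)
    rcases lt_or_gt_of_ne hab with h' | h'
    · exact ⟨a, b, h', h⟩
    · exact ⟨b, a, h', h.symm⟩
  set p := n - m with hp
  have hppos : 0 < p := Nat.sub_pos_of_lt hmn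
  have step : ∀ k, m ≤ k → c ^ (k + p) = c ^ k := by
    intro k hk
    have hk' : k + p = n + (k - m) := by omega
    have hk'' : k = m + (k - m) := by omega
    rw [hk', pow_add, ← h, ← pow_add, ← hk'']
  have key : ∀ j k, m ≤ k → c ^ (k + j * p) = c ^ k := by
    intro j
    induction j with
    | zero => intro k _; simp
    | succ j ih =>
      intro k hk
      have h1 : k + (j + 1) * p = (k + p) + j * p := by ring
      rw [h1, ih (k + p) (le_trans hk (Nat.le_add_right _ _)), step k hk]
  refine ⟨(m + 1) * p, by positivity, ?_⟩
  rw [← pow_add]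
  exact key (m + 1) ((m + 1) * p) (by nlinarith)

lemma coe_pow_succ (a : S) (i : ℕ) : ∃ d : S, ((↑a : WithOne S)) ^ (i + 1) = ↑d := by
  induction i with
  | zero => exact ⟨a, pow_one _⟩
  | succ i ih =>
    obtain ⟨d, hd⟩ := ih
    exact ⟨d * a, by rw [pow_succ, hd, WithOne.coe_mul]⟩

/-- Stability in a finite semigroup: `x ≤_𝓛 y` and `y ≤_𝓡 x` imply `y ≤_𝓛 x`. -/
lemma leL_of_leL_leR [Finite S] {x y : S} (h1 : leL x y) (h2 : leR y x) : leL y x := by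
  rcases h1 with rfl | ⟨a, rfl⟩
  · exact Or.inl rfl
  · rcases h2 with heq | ⟨c, hc⟩
    · exact Or.inl heq
    -- y = (a * y) * c
    have hM : (↑y : WithOne S) = ↑a * ↑y * ↑c := by
      rw [← WithOne.coe_mul, ← WithOne.coe_mul, ← hc]
    have iter : ∀ k : ℕ, (↑y : WithOne S) = (↑a) ^ k * ↑y * (↑c) ^ k := by
      intro k
      induction k with
      | zero => simp
      | succ k ih =>
        rw [pow_succ, pow_succ']
        calc (↑y : WithOne S) = (↑a) ^ k * ↑y * (↑c) ^ k := ih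
          _ = (↑a) ^ k * (↑a * ↑y * ↑c) * (↑c) ^ k := by rw [← hM]
          _ = (↑a) ^ k * ↑a * ↑y * (↑c * (↑c) ^ k) := by simp only [mul_assoc]
    haveI := Fintype.ofFinite S
    haveI : Finite (WithOne S) := inferInstanceAs (Finite (Option S))
    obtain ⟨k, hkpos, hidem⟩ := exists_idem_pow ((↑c : WithOne S))
    have hyc : (↑y : WithOne S) * (↑c) ^ k = ↑y := by
      conv_lhs => rw [iter k]
      rw [mul_assoc ((↑a : WithOne S) ^ k * ↑y), hidem, ← iter k]
    have hya : (↑y : WithOne S) = (↑a) ^ k * ↑y := by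
      conv_lhs => rw [iter k]
      rw [mul_assoc, hyc]
    obtain ⟨j, rfl⟩ := Nat.exists_eq_add_of_lt hkpos
    rw [zero_add] at hya
    rcases Nat.eq_zero_or_pos j with rfl | hjpos
    · rw [pow_one] at hya
      exact Or.inl (WithOne.coe_inj.mp (by rw [WithOne.coe_mul]; exact hya))
    · obtain ⟨i, rfl⟩ := Nat.exists_eq_add_of_lt hjpos
      rw [zero_add] at hya
      obtain ⟨d, hd⟩ := coe_pow_succ a i
      rw [pow_succ, hd, mul_assoc] at hya
      refine Or.inr ⟨d, WithOne.coe_inj.mp ?_⟩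
      rw [WithOne.coe_mul, WithOne.coe_mul]
      exact hya

end Aux

/-- `RMon` is a transformation monoid on `S = Sat_H̄(Tη)` containing every blowup
operator and every right multiplication map. -/
theorem rmon_properties (V : GroupVariety) (T : Type) [Semigroup T] [Finite T] :
    ((id : ↥(SatSub V T) → ↥(SatSub V T)) ∈ RMon ↥(SatSub V T)) ∧
    (∀ r r' : ↥(SatSub V T) → ↥(SatSub V T),
      r ∈ RMon ↥(SatSub V T) → r' ∈ RMon ↥(SatSub V T) →
      (fun q => r' (r q)) ∈ RMon ↥(SatSub V T)) ∧
    (∀ b : ↥(SatSub V T) → ↥(SatSub V T), IsPreBlowup V T b → (∀ s, b (b s) = b s) →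
      b ∈ RMon ↥(SatSub V T)) ∧
    (∀ m : WithOne ↥(SatSub V T), (fun q => actW q m) ∈ RMon ↥(SatSub V T)) := by
  set W := ↥(SatSub V T)
  refine ⟨?_, ?_, ?_, ?_⟩
  · -- identity
    refine ⟨fun q => leR_refl q, fun q q' h => h, 1, fun q _ => (actW_one q).symm⟩
  · -- composition
    rintro r r' ⟨hr1, hr2, qr, hr3⟩ ⟨hr1', hr2', qr', hr3'⟩
    refine ⟨fun q => leR_trans (hr1' (r q)) (hr1 q),
      fun q q' h => hr2' _ _ (hr2 _ _ h), qr * qr', ?_⟩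
    intro q h
    have h1 : eqR (r q) q := ⟨hr1 q, leR_trans h.2 (hr1' (r q))⟩
    have h2 : eqR (r' (r q)) (r q) := ⟨hr1' (r q), leR_trans (hr1 q) h.2⟩
    show r' (r q) = actW q (qr * qr')
    rw [hr3' (r q) h2, hr3 q h1, actW_actW]
  · -- blowup operators
    rintro b ⟨hb1, hb2, hb3, _⟩ hidem
    have hfix : ∀ q : W, eqR (b q) q → b q = q := by
      intro q h
      by_cases hq : IsHElement V q
      · exact hb2 q hq
      · obtain ⟨hle, hne⟩ := hb3 q hq
        exact absurd ⟨⟨hle.1, leL_of_leL_leR hle.1 h.2⟩, h⟩ hne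
    refine ⟨?_, ?_, 1, fun q h => by rw [hfix q h, actW_one]⟩
    · intro q
      by_cases hq : IsHElement V q
      · rw [hb2 q hq]; exact leR_refl q
      · exact (hb3 q hq).1.2
    · intro q q' h
      obtain ⟨m, hm⟩ := hb1 q'
      rw [hm q h, hm q' ⟨Or.inl rfl, Or.inl rfl⟩]
      exact eqL_actW h m
  · -- right multiplications
    intro m
    refine ⟨?_, fun q q' h => eqL_actW h m, m, fun q _ => rfl⟩
    intro q
    show leR (actW q m) q
    rcases eq_or_ne m 1 with rfl | hm
    · rw [actW_one]; exact leR_refl q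
    · obtain ⟨a, rfl⟩ := WithOne.ne_one_iff_exists.mp hm
      rw [actW_coe]; exact Or.inr ⟨a, rfl⟩
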